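/- Let a ∈ ℝ, V : [a,∞) → ℝ continuous with V(x) − E > 0 for all x ≥ a, where E ∈ ℝ. If ψ₁ and ψ₂ are twice continuously differentiable functions on [a,∞), both square-integrable on [a,∞), and both satisfying −ψ'' + Vψ = Eψ on [a,∞), then ψ₁ and ψ₂ are linearly dependent: there exist real constants c₁, c₂, not both zero, with c₁ψ₁(x) + c₂ψ₂(x) = 0 for all x ≥ a. -/

import Mathlib

open MeasureTheory Set

/-- Key lemma: an `L²` solution of `ψ'' = (V − E) ψ` on `[a, ∞)` with
`V − E > 0` that vanishes at `a` vanishes identically on `[a, ∞)`. -/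
lemma key_vanishing (a : ℝ) (V : ℝ → ℝ) (E : ℝ) (hVE : ∀ x ≥ a, 0 < V x - E)
    (ψ : ℝ → ℝ) (hC2 : ContDiffOn ℝ 2 ψ (Set.Ici a))
    (hL2 : IntegrableOn (fun x => (ψ x) ^ 2) (Set.Ici a))
    (heq : ∀ x > a, deriv (deriv ψ) x = (V x - E) * ψ x)
    (h0 : ψ a = 0) : ∀ x ≥ a, ψ x = 0 := by
  -- differentiability facts
  have hψd : ∀ x ∈ Set.Ioi a, DifferentiableAt ℝ ψ x := fun x hx =>
    (hC2.differentiableOn two_ne_zero).differentiableAt (Ici_mem_nhds hx)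
  have hgC1 : ContDiffOn ℝ 1 (deriv ψ) (Set.Ioi a) := by
    have := (hC2.mono Ioi_subset_Ici_self).deriv_of_isOpen isOpen_Ioi (m := 1)
    exact this (by norm_num)
  have hgd : ∀ x ∈ Set.Ioi a, DifferentiableAt ℝ (deriv ψ) x := fun x hx =>
    (hgC1.differentiableOn one_ne_zero).differentiableAt (isOpen_Ioi.mem_nhds hx)
  set F : ℝ → ℝ := fun x => 2 * (ψ x * deriv ψ x) with hF
  -- derivative of ψ² is F on Ioi a
  have hFd : ∀ x ∈ Set.Ioi a, HasDerivAt (fun y => ψ y ^ 2) (F x) x := by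
    intro x hx
    have : HasDerivAt (fun y => ψ y ^ 2) (↑2 * ψ x ^ (2 - 1) * deriv ψ x) x :=
      ((hψd x hx).hasDerivAt).fun_pow 2
    convert this using 1
    simp [hF]; ring
  -- F is monotone on Ioi a
  have hFmono : MonotoneOn F (Set.Ioi a) := by
    apply monotoneOn_of_deriv_nonneg (convex_Ioi a)
    · exact continuousOn_const.mul
        ((hC2.continuousOn.mono Ioi_subset_Ici_self).mul hgC1.continuousOn)
    · rw [interior_Ioi]
      intro x hx
      exact ((((hψd x hx).hasDerivAt.mul (hgd x hx).hasDerivAt).const_mul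
        2).differentiableAt).differentiableWithinAt
    · rw [interior_Ioi]
      intro x hx
      have hder : HasDerivAt F
          (2 * (deriv ψ x * deriv ψ x + ψ x * deriv (deriv ψ) x)) x :=
        ((hψd x hx).hasDerivAt.mul (hgd x hx).hasDerivAt).const_mul 2
      rw [hder.deriv, heq x hx]
      have h1 := (hVE x (le_of_lt hx)).le
      nlinarith [sq_nonneg (deriv ψ x), sq_nonneg (ψ x), mul_nonneg h1 (sq_nonneg (ψ x))]
  -- F is nonpositive on Ioi a
  have hFnonpos : ∀ x ∈ Set.Ioi a, F x ≤ 0 := by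
    by_contra hcon
    push_neg at hcon
    obtain ⟨x₀, hx₀, hm⟩ := hcon
    set m := F x₀ with hmdef
    -- linear growth: ψ x ^ 2 ≥ m * (x - x₀) for x ≥ x₀
    have hgrow : ∀ x ≥ x₀, m * (x - x₀) ≤ ψ x ^ 2 := by
      intro x hx
      have hmono : MonotoneOn (fun y => ψ y ^ 2 - m * y) (Set.Ici x₀) := by
        apply monotoneOn_of_deriv_nonneg (convex_Ici x₀)
        · refine ContinuousOn.sub ?_ (continuousOn_const.mul continuousOn_id)
          exact ((hC2.continuousOn.mono (Ici_subset_Ici.mpr hx₀.le)).pow 2)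
        · rw [interior_Ici]
          intro y hy
          have hy' : y ∈ Set.Ioi a := mem_Ioi.mpr (lt_trans (mem_Ioi.mp hx₀) (mem_Ioi.mp hy))
          exact ((hFd y hy').sub ((hasDerivAt_id y).const_mul
            m)).differentiableAt.differentiableWithinAt
        · rw [interior_Ici]
          intro y hy
          have hy' : y ∈ Set.Ioi a := mem_Ioi.mpr (lt_trans (mem_Ioi.mp hx₀) (mem_Ioi.mp hy))
          have hder : HasDerivAt (fun y => ψ y ^ 2 - m * y) (F y - m * 1) y :=
            (hFd y hy').sub ((hasDerivAt_id y).const_mul m)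
          rw [hder.deriv]
          have := hFmono hx₀ hy' hy.le
          simpa using this
      have := hmono (self_mem_Ici) (by exact hx : x ∈ Set.Ici x₀) hx
      simp only [] at this
      nlinarith [sq_nonneg (ψ x₀)]
    -- contradiction with integrability
    have hint : IntegrableOn (fun x => (ψ x) ^ 2) (Set.Ici (x₀ + 1)) :=
      hL2.mono_set (Ici_subset_Ici.mpr (by linarith [(mem_Ioi.mp hx₀).le] : a ≤ x₀ + 1))
    have hconst : IntegrableOn (fun _ : ℝ => m) (Set.Ici (x₀ + 1)) := by
      apply Integrable.mono' hint aestronglyMeasurable_const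
      filter_upwards [ae_restrict_mem measurableSet_Ici] with x hx
      rw [Real.norm_eq_abs, abs_of_pos hm]
      have hx' : x₀ ≤ x := by simp only [mem_Ici] at hx; linarith
      have := hgrow x hx'
      have hx1 : (1 : ℝ) ≤ x - x₀ := by simp only [mem_Ici] at hx; linarith
      nlinarith
    rw [integrableOn_const_iff] at hconst
    rcases hconst with h | h
    · exact absurd h (by simp [hm.ne'])
    · rw [Real.volume_Ici] at h
      exact absurd h (by simp)
  -- ψ² is antitone on Ici a
  have hanti : AntitoneOn (fun x => ψ x ^ 2) (Set.Ici a) := by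
    apply antitoneOn_of_deriv_nonpos (convex_Ici a)
    · exact hC2.continuousOn.pow 2
    · rw [interior_Ici]
      exact fun x hx => (hFd x hx).differentiableAt.differentiableWithinAt
    · rw [interior_Ici]
      intro x hx
      rw [(hFd x hx).deriv]
      exact hFnonpos x hx
  intro x hx
  have h1 := hanti self_mem_Ici (by exact hx : x ∈ Set.Ici a) hx
  simp only [h0] at h1
  have h2 : ψ x ^ 2 ≤ 0 := by simpa using h1
  have := sq_nonneg (ψ x)
  have : ψ x ^ 2 = 0 := le_antisymm h2 this
  exact pow_eq_zero_iff (by norm_num) |>.mp this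

/-- Half-line case of the partitioned uniqueness result (Corollary 2.5): on a
half-line where `V − E > 0`, any two square-integrable solutions of
`−ψ'' + Vψ = Eψ` are linearly dependent. -/
theorem L2_solutions_linearly_dependent (a : ℝ) (V : ℝ → ℝ)
    (hV : ContinuousOn V (Set.Ici a)) (E : ℝ) (hVE : ∀ x ≥ a, 0 < V x - E)
    (ψ₁ ψ₂ : ℝ → ℝ)
    (hψ₁C2 : ContDiffOn ℝ 2 ψ₁ (Set.Ici a))
    (hψ₂C2 : ContDiffOn ℝ 2 ψ₂ (Set.Ici a))
    (hψ₁L2 : IntegrableOn (fun x => (ψ₁ x) ^ 2) (Set.Ici a))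
    (hψ₂L2 : IntegrableOn (fun x => (ψ₂ x) ^ 2) (Set.Ici a))
    (heq₁ : ∀ x ≥ a, -(deriv (deriv ψ₁) x) + V x * ψ₁ x = E * ψ₁ x)
    (heq₂ : ∀ x ≥ a, -(deriv (deriv ψ₂) x) + V x * ψ₂ x = E * ψ₂ x) :
    ∃ c₁ c₂ : ℝ, (c₁ ≠ 0 ∨ c₂ ≠ 0) ∧ ∀ x ≥ a, c₁ * ψ₁ x + c₂ * ψ₂ x = 0 := by
  by_cases h1 : ψ₁ a = 0 ∧ ψ₂ a = 0
  · -- then ψ₁ ≡ 0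
    have hz := key_vanishing a V E hVE ψ₁ hψ₁C2 hψ₁L2
      (fun x hx => by have := heq₁ x hx.le; ring_nf; linarith) h1.1
    exact ⟨1, 0, Or.inl one_ne_zero, fun x hx => by simp [hz x hx]⟩
  · set c₁ := ψ₂ a with hc₁
    set c₂ := -(ψ₁ a) with hc₂
    refine ⟨c₁, c₂, ?_, ?_⟩
    · by_contra hcon
      push_neg at hcon
      exact h1 ⟨by simpa [hc₂] using hcon.2, by simpa [hc₁] using hcon.1⟩
    · set φ : ℝ → ℝ := fun x => c₁ * ψ₁ x + c₂ * ψ₂ x with hφ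
      have hφC2 : ContDiffOn ℝ 2 φ (Set.Ici a) :=
        (contDiffOn_const.mul hψ₁C2).add (contDiffOn_const.mul hψ₂C2)
      have hφL2 : IntegrableOn (fun x => (φ x) ^ 2) (Set.Ici a) := by
        apply Integrable.mono'
          (((hψ₁L2.const_mul (2 * c₁ ^ 2)).add (hψ₂L2.const_mul (2 * c₂ ^ 2))))
        · exact ((hφC2.continuousOn.pow 2).aestronglyMeasurable measurableSet_Ici)
        · filter_upwards [ae_restrict_mem measurableSet_Ici] with x _
          rw [Real.norm_eq_abs, abs_of_nonneg (sq_nonneg _)]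
          simp only [hφ, Pi.add_apply]
          nlinarith [sq_nonneg (c₁ * ψ₁ x - c₂ * ψ₂ x)]
      -- φ satisfies the ODE on Ioi a
      have hd₁ : ∀ x ∈ Set.Ioi a, DifferentiableAt ℝ ψ₁ x := fun x hx =>
        (hψ₁C2.differentiableOn two_ne_zero).differentiableAt (Ici_mem_nhds hx)
      have hd₂ : ∀ x ∈ Set.Ioi a, DifferentiableAt ℝ ψ₂ x := fun x hx =>
        (hψ₂C2.differentiableOn two_ne_zero).differentiableAt (Ici_mem_nhds hx)
      have hg₁ : ∀ x ∈ Set.Ioi a, DifferentiableAt ℝ (deriv ψ₁) x := fun x hx =>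
        ((((hψ₁C2.mono Ioi_subset_Ici_self).deriv_of_isOpen isOpen_Ioi (m := 1))
          (by norm_num)).differentiableOn one_ne_zero).differentiableAt
          (isOpen_Ioi.mem_nhds hx)
      have hg₂ : ∀ x ∈ Set.Ioi a, DifferentiableAt ℝ (deriv ψ₂) x := fun x hx =>
        ((((hψ₂C2.mono Ioi_subset_Ici_self).deriv_of_isOpen isOpen_Ioi (m := 1))
          (by norm_num)).differentiableOn one_ne_zero).differentiableAt
          (isOpen_Ioi.mem_nhds hx)
      have hφeq : ∀ x > a, deriv (deriv φ) x = (V x - E) * φ x := by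
        intro x hx
        have hEq : Set.EqOn (deriv φ)
            (fun y => c₁ * deriv ψ₁ y + c₂ * deriv ψ₂ y) (Set.Ioi a) := by
          intro y hy
          have := (((hd₁ y hy).hasDerivAt.const_mul c₁).add
            ((hd₂ y hy).hasDerivAt.const_mul c₂)).deriv
          exact this
        have hEvEq : deriv φ =ᶠ[nhds x]
            (fun y => c₁ * deriv ψ₁ y + c₂ * deriv ψ₂ y) :=
          Filter.eventuallyEq_of_mem (isOpen_Ioi.mem_nhds hx) hEq
        rw [hEvEq.deriv_eq]
        have := (((hg₁ x hx).hasDerivAt.const_mul c₁).add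
          ((hg₂ x hx).hasDerivAt.const_mul c₂)).deriv
        rw [show deriv (fun y => c₁ * deriv ψ₁ y + c₂ * deriv ψ₂ y) x = _ from this]
        have e₁ : deriv (deriv ψ₁) x = (V x - E) * ψ₁ x := by
          have := heq₁ x hx.le; ring_nf; ring_nf at this; linarith
        have e₂ : deriv (deriv ψ₂) x = (V x - E) * ψ₂ x := by
          have := heq₂ x hx.le; ring_nf; ring_nf at this; linarith
        simp only [hφ]
        rw [e₁, e₂]; ring
      have hφa : φ a = 0 := by simp [hφ, hc₁, hc₂]; ring
      exact key_vanishing a V E hVE φ hφC2 hφL2 hφeq hφa
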